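/- arXiv:1009.3113 — 8 statements merged into one kernel-verified Lean document; each statement's English description precedes it below -/
import Mathlib

section
/- Let β* = (√17-3)/2. The infinite product identity holds: (4/(β*(2β*+3))) · (Γ(√17+1)/Γ(√17 - β* + 1)) · (1/Γ(β*+2)²) · (1/(1+β*/2)) = Γ(2(β*+1))/(2·Γ(β*+1)³). -/
open Real

/-- For β* = (√17-3)/2:
(4/(β*(2β*+3))) · (Γ(√17+1)/Γ(√17 - β* + 1)) · (1/Γ(β*+2)²) · (1/(1+β*/2))
  = Γ(2(β*+1))/(2·Γ(β*+1)³). -/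
theorem stmt4 :
    (4 / (((Real.sqrt 17 - 3) / 2) * (2 * ((Real.sqrt 17 - 3) / 2) + 3)))
      * (Real.Gamma (Real.sqrt 17 + 1) / Real.Gamma (Real.sqrt 17 - (Real.sqrt 17 - 3) / 2 + 1))
      * (1 / Real.Gamma ((Real.sqrt 17 - 3) / 2 + 2) ^ 2)
      * (1 / (1 + ((Real.sqrt 17 - 3) / 2) / 2))
    = Real.Gamma (2 * ((Real.sqrt 17 - 3) / 2 + 1))
        / (2 * Real.Gamma ((Real.sqrt 17 - 3) / 2 + 1) ^ 3) := by
  have hsq : Real.sqrt 17 ^ 2 = 17 := Real.sq_sqrt (by norm_num)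
  have hs3 : (3:ℝ) < Real.sqrt 17 := by
    nlinarith [Real.sqrt_nonneg 17]
  set b : ℝ := (Real.sqrt 17 - 3) / 2 with hb
  have hbpos : 0 < b := by simp only [hb]; linarith
  have hs : Real.sqrt 17 = 2 * b + 3 := by simp only [hb]; ring
  have hb2 : b ^ 2 + 3 * b = 2 := by
    have : (2 * b + 3) ^ 2 = 17 := by rw [← hs]; exact hsq
    nlinarith
  
  have hGb1 : 0 < Real.Gamma (b + 1) := Real.Gamma_pos_of_pos (by linarith)
  have hG2b2 : 0 < Real.Gamma (2 * b + 2) := Real.Gamma_pos_of_pos (by linarith)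
  -- Γ(√17+1) = Γ(2b+4) = (2b+3)(2b+2)Γ(2b+2)
  have e1 : Real.Gamma (Real.sqrt 17 + 1)
      = (2 * b + 3) * ((2 * b + 2) * Real.Gamma (2 * b + 2)) := by
    rw [hs]
    have h1 : (2 * b + 3 + 1 : ℝ) = (2 * b + 3) + 1 := by ring
    rw [h1, Real.Gamma_add_one (by linarith : (2 * b + 3 : ℝ) ≠ 0)]
    have h2 : (2 * b + 3 : ℝ) = (2 * b + 2) + 1 := by ring
    rw [h2, Real.Gamma_add_one (by linarith : (2 * b + 2 : ℝ) ≠ 0)]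
  -- Γ(√17 - b + 1) = Γ(b+4) = (b+3)(b+2)(b+1)Γ(b+1)
  have e2 : Real.Gamma (Real.sqrt 17 - b + 1)
      = (b + 3) * ((b + 2) * ((b + 1) * Real.Gamma (b + 1))) := by
    rw [hs]
    have h1 : (2 * b + 3 - b + 1 : ℝ) = (b + 3) + 1 := by ring
    rw [h1, Real.Gamma_add_one (by linarith : (b + 3 : ℝ) ≠ 0)]
    have h2 : (b + 3 : ℝ) = (b + 2) + 1 := by ring
    rw [h2, Real.Gamma_add_one (by linarith : (b + 2 : ℝ) ≠ 0)]
    have h3 : (b + 2 : ℝ) = (b + 1) + 1 := by ring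
    rw [h3, Real.Gamma_add_one (by linarith : (b + 1 : ℝ) ≠ 0)]
  -- Γ(b+2) = (b+1)Γ(b+1)
  have e3 : Real.Gamma (b + 2) = (b + 1) * Real.Gamma (b + 1) := by
    have h3 : (b + 2 : ℝ) = (b + 1) + 1 := by ring
    rw [h3, Real.Gamma_add_one (by linarith : (b + 1 : ℝ) ≠ 0)]
  have e4 : (2 * (b + 1) : ℝ) = 2 * b + 2 := by ring
  rw [e1, e2, e3, e4]
  have hne1 : Real.Gamma (b + 1) ≠ 0 := ne_of_gt hGb1
  field_simp
  linear_combination (-(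
    ((b^2+3*b)^2 + 6*(b^2+3*b) + 16))) * hb2
end

section
/- The probability that M₀(x) < x ∧ (1-x), where M₀(x) has the law described by the density ∫-representation, equals -(x ∧ (1-x))·ln(x(1-x)) for x ∈ (0,1), and this quantity lies in (0,1). -/
open MeasureTheory intervalIntegral

/-- For x ∈ (0,1), the probability that M₀(x) < x ∧ (1-x), computed from the joint
density g(m,y) = (1/y)·1_{y>x, 0<m<x/y} + (1/(1-y))·1_{y<x, 0<m<(1-x)/(1-y)},
equals -(x ∧ (1-x))·ln(x(1-x)), and this quantity lies in (0,1). -/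
theorem stmt8 (x : ℝ) (hx : x ∈ Set.Ioo (0:ℝ) 1) :
    ((∫ y in x..1, min (x / y) (min x (1 - x)) / y)
        + ∫ y in (0:ℝ)..x, min ((1 - x) / (1 - y)) (min x (1 - x)) / (1 - y))
      = -(min x (1 - x)) * Real.log (x * (1 - x))
    ∧ (-(min x (1 - x)) * Real.log (x * (1 - x))) ∈ Set.Ioo (0:ℝ) 1 := by
  obtain ⟨hx0, hx1⟩ := hx
  have hx1' : (0:ℝ) < 1 - x := by linarith
  set m := min x (1 - x) with hm
  have hm0 : 0 < m := lt_min hx0 hx1'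
  have hmx : m ≤ x := min_le_left _ _
  have hmx' : m ≤ 1 - x := min_le_right _ _
  have hmh : 2 * m ≤ 1 := by linarith
  have hprod : m * (1 - m) = x * (1 - x) := by
    rcases le_total x (1 - x) with h | h
    · rw [hm, min_eq_left h]
    · rw [hm, min_eq_right h]; ring
  have I1 : (∫ y in x..1, min (x / y) m / y) = m * -Real.log x := by
    have hcong : Set.EqOn (fun y => min (x / y) m / y) (fun y => m * (1 / y))
        (Set.uIcc x 1) := by
      intro y hy
      rw [Set.uIcc_of_le hx1.le] at hy
      have hy0 : 0 < y := lt_of_lt_of_le hx0 hy.1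
      have hle : m ≤ x / y := hmx.trans (by rw [le_div_iff₀ hy0]; nlinarith [hy.2])
      simp only [min_eq_right hle]
      field_simp
    rw [intervalIntegral.integral_congr hcong, intervalIntegral.integral_const_mul,
      integral_one_div (by
        rw [Set.uIcc_of_le hx1.le]; intro h; exact hx0.not_ge h.1)]
    rw [one_div, Real.log_inv]
  have I2 : (∫ y in (0:ℝ)..x, min ((1 - x) / (1 - y)) m / (1 - y))
      = m * -Real.log (1 - x) := by
    have hcong : Set.EqOn (fun y => min ((1 - x) / (1 - y)) m / (1 - y))
        (fun y => m * (1 / (1 - y))) (Set.uIcc 0 x) := by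
      intro y hy
      rw [Set.uIcc_of_le hx0.le] at hy
      have hy0 : 0 < 1 - y := by have := hy.2; linarith
      have hle : m ≤ (1 - x) / (1 - y) := hmx'.trans
        (by rw [le_div_iff₀ hy0]; nlinarith [hy.1])
      simp only [min_eq_right hle]
      field_simp
    rw [intervalIntegral.integral_congr hcong, intervalIntegral.integral_const_mul]
    have hsub : (∫ y in (0:ℝ)..x, 1 / (1 - y)) = ∫ u in (1 - x)..(1:ℝ), 1 / u := by
      simpa using intervalIntegral.integral_comp_sub_left (fun u => 1 / u) 1 (a := 0) (b := x)
    rw [hsub, integral_one_div (by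
      rw [Set.uIcc_of_le (by linarith : 1 - x ≤ 1)]; intro h; exact hx1'.not_ge h.1)]
    rw [one_div, Real.log_inv]
  have hlogm : Real.log (x * (1 - x)) = Real.log x + Real.log (1 - x) :=
    Real.log_mul hx0.ne' hx1'.ne'
  constructor
  · rw [I1, I2, hlogm]; ring
  · rw [← hprod]
    have h1m : 0 < 1 - m := by linarith
    have hmm1 : m * (1 - m) < 1 := by nlinarith
    have hlogneg : Real.log (m * (1 - m)) < 0 :=
      Real.log_neg (by positivity) hmm1
    constructor
    · have : 0 < m * -Real.log (m * (1 - m)) := by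
        apply mul_pos hm0; linarith
      linarith [this]
    · have hsplit : Real.log (m * (1 - m)) = Real.log m + Real.log (1 - m) :=
        Real.log_mul hm0.ne' h1m.ne'
      have ha : Real.log m⁻¹ < m⁻¹ - 1 :=
        Real.log_lt_sub_one_of_pos (by positivity)
          (by simp; intro h; rw [h] at hmh; linarith)
      have hb : Real.log (1 - m)⁻¹ < (1 - m)⁻¹ - 1 :=
        Real.log_lt_sub_one_of_pos (by positivity)
          (by intro h; rw [inv_eq_one] at h; linarith)
      rw [Real.log_inv] at ha hb
      have ha' : m * (-Real.log m) < 1 - m := by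
        have := (mul_lt_mul_iff_right₀ hm0).2 ha
        have hinv : m * (m⁻¹ - 1) = 1 - m := by field_simp
        linarith [hinv ▸ this]
      have hb' : (1 - m) * (m * (-Real.log (1 - m))) < m * m := by
        have := (mul_lt_mul_iff_right₀ h1m).2 hb
        have hinv : (1 - m) * ((1 - m)⁻¹ - 1) = m := by field_simp; ring
        nlinarith [this]
      rw [hsplit]
      nlinarith [mul_pos hm0 h1m, (mul_lt_mul_iff_right₀ h1m).2 ha']
end

section
/- Define the Markov transition kernel on (0,1) ∪ {∂} by p(x, dy) = (x ∧ (1-x))·δ_∂ + [((1-x)/(1-y)²)·1_{y∈(0,x)} + (x/y²)·1_{y∈(x,1)} - (x ∧ (1-x))] dy for x ∈ (0,1) and p(∂,·) = δ_∂, and define V(x) = 1_{x=∂} + (10/√x)·1_{x∈(0,1/2)} + (10/√(1-x))·1_{x∈[1/2,1)}. Then for every x ∈ (0,1) ∪ {∂}, ∫ p(x,dy) V(y) ≤ 0.85·V(x) + 1_{∂}(x). -/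
open MeasureTheory intervalIntegral Set


lemma ftc_right {F f : ℝ → ℝ} {a b : ℝ} (hab : a ≤ b)
    (hF : ContinuousOn F (Set.Icc a b))
    (hd : ∀ y ∈ Set.Ioo a b, HasDerivAt F (f y) y)
    (hi : IntervalIntegrable f volume a b) :
    ∫ y in a..b, f y = F b - F a :=
  integral_eq_sub_of_hasDeriv_right_of_le hab hF
    (fun y hy => (hd y hy).hasDerivWithinAt) hi

lemma ii_of_bound {f : ℝ → ℝ} {b C : ℝ} (hb : 0 ≤ b) (hC : 0 ≤ C)
    (hm : AEStronglyMeasurable f (volume.restrict (Set.Ioc 0 b)))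
    (h : ∀ y ∈ Set.Ioc (0:ℝ) b, |f y| ≤ C / Real.sqrt y) :
    IntervalIntegrable f volume 0 b := by
  have base : IntervalIntegrable (fun y => C * y ^ (-(1/2):ℝ)) volume 0 b :=
    (intervalIntegrable_rpow' (by norm_num)).const_mul C
  rw [intervalIntegrable_iff, uIoc_of_le hb] at base ⊢
  refine MeasureTheory.Integrable.mono base hm ?_
  filter_upwards [ae_restrict_mem measurableSet_Ioc] with y hy
  have h1 := h y hy
  have hy0 : (0:ℝ) < y := hy.1
  have he : C * y ^ (-(1/2):ℝ) = C / Real.sqrt y := by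
    rw [Real.rpow_neg hy0.le, Real.sqrt_eq_rpow]
    norm_num [div_eq_mul_inv]
  rw [Real.norm_eq_abs, Real.norm_eq_abs, he,
    abs_of_nonneg (div_nonneg hC (Real.sqrt_nonneg y))]
  exact h1

lemma sqrt_sub {y : ℝ} (hy : 0 < y) :
    ∃ s : ℝ, 0 < s ∧ Real.sqrt y = s ∧ y = s * s :=
  ⟨Real.sqrt y, Real.sqrt_pos.2 hy, rfl, (Real.mul_self_sqrt hy.le).symm⟩

lemma hasDerivAt_Asqrt {y : ℝ} (hy : 0 < y) :
    HasDerivAt (fun z => ((4/3)*z + (6/5)*z^2 + (8/7)*z^3 + (10/9)*z^4 + (28/11)*z^5) * Real.sqrt z)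
      (Real.sqrt y * (2 + 3*y + 4*y^2 + 5*y^3 + 14*y^4)) y := by
  have hA : HasDerivAt (fun z : ℝ => (4/3)*z + (6/5)*z^2 + (8/7)*z^3 + (10/9)*z^4 + (28/11)*z^5)
      (4/3 + (12/5)*y + (24/7)*y^2 + (40/9)*y^3 + (140/11)*y^4) y := by
    have h := ((((((hasDerivAt_pow 1 y).const_mul ((4:ℝ)/3)).add
      ((hasDerivAt_pow 2 y).const_mul ((6:ℝ)/5))).add
      ((hasDerivAt_pow 3 y).const_mul ((8:ℝ)/7))).add
      ((hasDerivAt_pow 4 y).const_mul ((10:ℝ)/9))).add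
      ((hasDerivAt_pow 5 y).const_mul ((28:ℝ)/11)))
    simp only [pow_one] at h
    refine h.congr_deriv (Eq.symm ?_)
    push_cast; ring
  have h := hA.mul (Real.hasDerivAt_sqrt hy.ne')
  refine h.congr_deriv (Eq.symm ?_)
  obtain ⟨s, hs0, hsq, hyy⟩ := sqrt_sub hy
  rw [hsq, hyy]
  field_simp
  ring

lemma hasDerivAt_two_sqrt {y : ℝ} (hy : 0 < y) :
    HasDerivAt (fun z => 2 * Real.sqrt z) (1 / Real.sqrt y) y := by
  have h := (Real.hasDerivAt_sqrt hy.ne').const_mul 2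
  refine h.congr_deriv (Eq.symm ?_)
  have h0 : Real.sqrt y ≠ 0 := by positivity
  field_simp

lemma hasDerivAt_inv_ysqrt {y : ℝ} (hy : 0 < y) :
    HasDerivAt (fun z => 1 / (z * Real.sqrt z)) (-((3/2) / (y^2 * Real.sqrt y))) y := by
  have hs : HasDerivAt (fun z : ℝ => z * Real.sqrt z)
      (1 * Real.sqrt y + y * (1 / (2 * Real.sqrt y))) y :=
    (hasDerivAt_id y).mul (Real.hasDerivAt_sqrt hy.ne')
  have hne : y * Real.sqrt y ≠ 0 := by positivity
  have h := (hasDerivAt_const y (1:ℝ)).div hs hne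
  refine h.congr_deriv (Eq.symm ?_)
  obtain ⟨s, hs0, hsq, hyy⟩ := sqrt_sub hy
  rw [hsq, hyy]
  field_simp
  ring

lemma p5_core {u : ℝ} (h0 : 0 ≤ u) (h2 : u ≤ 1/2) :
    1 ≤ (1 + 2*u + 3*u^2 + 4*u^3 + 5*u^4 + 14*u^5) * (1-u)^2 := by
  nlinarith [mul_nonneg (mul_nonneg (pow_nonneg h0 5) (sub_nonneg.2 h2))
    (sub_nonneg.2 (show u ≤ 8/7 by linarith))]

lemma p5_le {u : ℝ} (h0 : 0 ≤ u) (h2 : u ≤ 1/2) :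
    1 + 2*u + 3*u^2 + 4*u^3 + 5*u^4 + 14*u^5 ≤ 4 := by
  nlinarith [pow_nonneg h0 2, pow_nonneg h0 3, pow_nonneg h0 4, pow_nonneg h0 5]

set_option maxHeartbeats 1000000 in
lemma final_ineq {t r : ℝ} (ht : 0 < t) (ht2 : t*t ≤ 1/2) (hr : 0 < r) (hr2 : r*r = 1/2) :
    (t*t)*1
    + ((20-40*(t*t))*t + 10*(1-(t*t))*(((4/3)*(t*t) + (6/5)*(t*t)^2 + (8/7)*(t*t)^3
        + (10/9)*(t*t)^4 + (28/11)*(t*t)^5) * t))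
    + ((-((20*(t*t)/3) * (1/((1/2)*r))) - 20*(t*t)*r)
        - (-((20*(t*t)/3) * (1/((t*t)*t))) - 20*(t*t)*t))
    + (10*(t*t)*(((4/3)*(1/2) + (6/5)*(1/2)^2 + (8/7)*(1/2)^3 + (10/9)*(1/2)^4
        + (28/11)*(1/2)^5) * r))
    ≤ 0.85 * (10/t) := by
  have hrb : (0.707106:ℝ) ≤ r := by nlinarith
  have hrinv : 1/r = 2*r := by
    rw [div_eq_iff hr.ne']; nlinarith
  rw [← sub_nonneg]
  have key : 0.85 * (10/t) - ((t*t)*1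
    + ((20-40*(t*t))*t + 10*(1-(t*t))*(((4/3)*(t*t) + (6/5)*(t*t)^2 + (8/7)*(t*t)^3
        + (10/9)*(t*t)^4 + (28/11)*(t*t)^5) * t))
    + ((-((20*(t*t)/3) * (1/((1/2)*r))) - 20*(t*t)*r)
        - (-((20*(t*t)/3) * (1/((t*t)*t))) - 20*(t*t)*t))
    + (10*(t*t)*(((4/3)*(1/2) + (6/5)*(1/2)^2 + (8/7)*(1/2)^3 + (10/9)*(1/2)^4
        + (28/11)*(1/2)^5) * r)))
      = (8.5 - (t^3 + 20*t^2 - 40*t^4 + (40/3)*(1-t^2)*t^4 + 12*(1-t^2)*t^6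
          + (80/7)*(1-t^2)*t^8 + (100/9)*(1-t^2)*t^10 + (280/11)*(1-t^2)*t^12
          + 20/3 + 20*t^4 - (47237/1386)*r*t^3)) / t := by
    have h4 : 1/((1/2)*r) = 4*r := by
      rw [div_eq_iff (by positivity : (1/2:ℝ)*r ≠ 0)]; nlinarith
    rw [h4]
    field_simp
    ring
  rw [key]
  apply div_nonneg _ ht.le
  rw [sub_nonneg]
  have h2 : t^2 ≤ 1/2 := by nlinarith
  have hst : (24.099:ℝ)*t^3 ≤ (47237/1386)*r*t^3 := by
    have h3 : (0:ℝ) ≤ t^3 := by positivity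
    nlinarith
  have e12 : t^12 ≤ (1/8)*t^6 := by
    have h8 : (t^2)^3 ≤ (1/2)^3 := pow_le_pow_left₀ (sq_nonneg t) h2 3
    calc t^12 = t^6*(t^2)^3 := by ring
    _ ≤ t^6*(1/2)^3 := by
        apply mul_le_mul_of_nonneg_left h8 (by positivity)
    _ = (1/8)*t^6 := by ring
  have e64 : t^6 ≤ (1/2)*t^4 := by
    calc t^6 = t^4*t^2 := by ring
    _ ≤ t^4*(1/2) := mul_le_mul_of_nonneg_left h2 (by positivity)
    _ = (1/2)*t^4 := by ring
  have e8 : (0:ℝ) ≤ t^8 := by positivity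
  have e10 : (0:ℝ) ≤ t^10 := by positivity
  have e14 : (0:ℝ) ≤ t^14 := by positivity
  have quart : 20*t^2 ≤ 11/6 + 23.099*t^3 + (2549/396)*t^4 := by
    nlinarith [mul_nonneg ht.le (sq_nonneg (t - 0.49)), sq_nonneg (t^2 - 0.49*t),
      sq_nonneg (t - 0.49), sq_nonneg t]
  nlinarith [hst, e12, e64, e8, e10, e14, quart]


set_option maxHeartbeats 1000000 in
lemma main_half (V : Option ℝ → ℝ)
    (hVd : V none = 1)
    (hV1 : ∀ y ∈ Set.Ioo (0:ℝ) (1/2), V (some y) = 10 / Real.sqrt y)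
    (hV2 : ∀ y ∈ Set.Ico (1/2:ℝ) 1, V (some y) = 10 / Real.sqrt (1 - y))
    {x : ℝ} (hx0 : 0 < x) (hx2 : x ≤ 1/2) :
    (min x (1 - x)) * V none
        + (∫ y in (0:ℝ)..1,
            ((if y < x then (1 - x) / (1 - y) ^ 2 else 0)
              + (if x < y then x / y ^ 2 else 0) - min x (1 - x)) * V (some y))
      ≤ 0.85 * V (some x) := by
  have hx1 : x < 1 := by linarith
  have hmin : min x (1-x) = x := min_eq_left (by linarith)
  have hVx : V (some x) = 10 / Real.sqrt x := by
    rcases lt_or_eq_of_le hx2 with h | h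
    · exact hV1 x ⟨hx0, h⟩
    · have h2 := hV2 x ⟨le_of_eq h.symm, hx1⟩
      rw [h2, show (1:ℝ) - x = x by rw [h]; norm_num]
  set g : ℝ → ℝ := fun y =>
      ((if y < x then (1 - x) / (1 - y) ^ 2 else 0)
        + (if x < y then x / y ^ 2 else 0) - min x (1 - x)) * V (some y) with hgdef
  set g₁ : ℝ → ℝ := fun y => ((1-x)/(1-y)^2 - x) * (10/Real.sqrt y) with hg1def
  set φ₁ : ℝ → ℝ := fun y =>
      ((1-x)*(1 + 2*y + 3*y^2 + 4*y^3 + 5*y^4 + 14*y^5) - x) * (10/Real.sqrt y) with hp1def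
  set g₂ : ℝ → ℝ := fun y => (x/y^2 - x) * (10/Real.sqrt y) with hg2def
  set g₃ : ℝ → ℝ := fun y => (x/y^2 - x) * (10/Real.sqrt (1-y)) with hg3def
  set f₃ : ℝ → ℝ := fun u =>
      (10*x) * (Real.sqrt u * (2 + 3*u + 4*u^2 + 5*u^3 + 14*u^4)) with hf3def
  -- pointwise identifications
  have hEq1 : Set.EqOn g g₁ (Set.Ioo 0 x) := by
    intro y hy
    have h1 : y < x := hy.2
    have h2 : ¬ (x < y) := by linarith [hy.2]
    simp only [hgdef, hg1def, if_pos h1, if_neg h2, hmin,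
      hV1 y ⟨hy.1, lt_of_lt_of_le hy.2 hx2⟩]
    ring
  have hEq2 : Set.EqOn g g₂ (Set.Ioo x (1/2)) := by
    intro y hy
    have h1 : ¬ (y < x) := by linarith [hy.1]
    have h2 : x < y := hy.1
    simp only [hgdef, hg2def, if_neg h1, if_pos h2, hmin,
      hV1 y ⟨lt_trans hx0 hy.1, hy.2⟩]
    ring
  have hEq3 : Set.EqOn g g₃ (Set.Ioo (1/2) 1) := by
    intro y hy
    have h1 : ¬ (y < x) := by linarith [hy.1]
    have h2 : x < y := by linarith [hy.1]
    simp only [hgdef, hg3def, if_neg h1, if_pos h2, hmin,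
      hV2 y ⟨hy.1.le, hy.2⟩]
    ring
  -- integrability of the comparison functions
  have mg1 : AEStronglyMeasurable g₁ (volume.restrict (Set.Ioc 0 x)) := by
    apply Measurable.aestronglyMeasurable
    fun_prop
  have ig1 : IntervalIntegrable g₁ volume 0 x := by
    apply ii_of_bound hx0.le (by norm_num : (0:ℝ) ≤ 50) mg1
    intro y hy
    have hy0 : (0:ℝ) < y := hy.1
    have hden : (0:ℝ) < (1-y)^2 := by nlinarith [hy.2]
    have hub : (1-x)/(1-y)^2 ≤ 4 := by
      rw [div_le_iff₀ hden]; nlinarith [hy.2]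
    have hlb : (0:ℝ) ≤ (1-x)/(1-y)^2 := div_nonneg (by linarith) hden.le
    have habs : |(1-x)/(1-y)^2 - x| ≤ 5 := abs_le.2 ⟨by linarith, by linarith⟩
    calc |g₁ y| = |(1-x)/(1-y)^2 - x| * (10/Real.sqrt y) := by
          rw [hg1def, abs_mul, abs_of_nonneg (by positivity : (0:ℝ) ≤ 10/Real.sqrt y)]
    _ ≤ 5 * (10/Real.sqrt y) := mul_le_mul_of_nonneg_right habs (by positivity)
    _ = 50/Real.sqrt y := by ring
  have mp1 : AEStronglyMeasurable φ₁ (volume.restrict (Set.Ioc 0 x)) := by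
    apply Measurable.aestronglyMeasurable
    fun_prop
  have ip1 : IntervalIntegrable φ₁ volume 0 x := by
    apply ii_of_bound hx0.le (by norm_num : (0:ℝ) ≤ 50) mp1
    intro y hy
    have hy0 : (0:ℝ) < y := hy.1
    have hy2 : y ≤ 1/2 := le_trans hy.2 hx2
    have hub := p5_le hy0.le hy2
    have hlb : (0:ℝ) ≤ 1 + 2*y + 3*y^2 + 4*y^3 + 5*y^4 + 14*y^5 := by positivity
    have habs : |(1-x)*(1 + 2*y + 3*y^2 + 4*y^3 + 5*y^4 + 14*y^5) - x| ≤ 5 := by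
      apply abs_le.2
      constructor
      · nlinarith
      · nlinarith
    calc |φ₁ y| = |(1-x)*(1 + 2*y + 3*y^2 + 4*y^3 + 5*y^4 + 14*y^5) - x| * (10/Real.sqrt y) := by
          rw [hp1def, abs_mul, abs_of_nonneg (by positivity : (0:ℝ) ≤ 10/Real.sqrt y)]
    _ ≤ 5 * (10/Real.sqrt y) := mul_le_mul_of_nonneg_right habs (by positivity)
    _ = 50/Real.sqrt y := by ring
  have ig2 : IntervalIntegrable g₂ volume x (1/2) := by
    apply ContinuousOn.intervalIntegrable
    rw [Set.uIcc_of_le hx2]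
    have hpos : ∀ y ∈ Set.Icc x (1/2), (0:ℝ) < y := fun y hy => lt_of_lt_of_le hx0 hy.1
    apply ContinuousOn.mul
    · apply ContinuousOn.sub _ continuousOn_const
      exact continuousOn_const.div (by fun_prop)
        (fun y hy => pow_ne_zero 2 (hpos y hy).ne')
    · exact continuousOn_const.div (Real.continuous_sqrt.continuousOn)
        (fun y hy => (Real.sqrt_pos.2 (hpos y hy)).ne')
  have if2 : IntervalIntegrable (fun u => (x/(1-u)^2 - x) * (10/Real.sqrt u)) volume 0 (1/2) := by
    apply ii_of_bound (by norm_num) (by norm_num : (0:ℝ) ≤ 50)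
    · apply Measurable.aestronglyMeasurable; fun_prop
    intro u hu
    have hu0 : (0:ℝ) < u := hu.1
    have hden : (0:ℝ) < (1-u)^2 := by nlinarith [hu.2]
    have hub : x/(1-u)^2 ≤ 4 := by
      rw [div_le_iff₀ hden]; nlinarith [hu.2]
    have hlb : (0:ℝ) ≤ x/(1-u)^2 := div_nonneg hx0.le hden.le
    have habs : |x/(1-u)^2 - x| ≤ 5 := abs_le.2 ⟨by linarith, by linarith⟩
    calc |(x/(1-u)^2 - x) * (10/Real.sqrt u)|
        = |x/(1-u)^2 - x| * (10/Real.sqrt u) := by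
          rw [abs_mul, abs_of_nonneg (by positivity : (0:ℝ) ≤ 10/Real.sqrt u)]
    _ ≤ 5 * (10/Real.sqrt u) := mul_le_mul_of_nonneg_right habs (by positivity)
    _ = 50/Real.sqrt u := by ring
  have ig3 : IntervalIntegrable g₃ volume (1/2) 1 := by
    have h := if2.comp_sub_left 1
    have he : g₃ = (fun y : ℝ => (x/(1-(1-y))^2 - x) * (10/Real.sqrt (1-y))) := by
      funext y
      rw [hg3def, show (1:ℝ)-(1-y) = y by ring]
    have h2 := h.symm
    norm_num at h2
    exact h2
  have if3 : IntervalIntegrable f₃ volume 0 (1/2) := by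
    apply Continuous.intervalIntegrable
    rw [hf3def]; fun_prop
  have ipsi : IntervalIntegrable (fun y => f₃ (1-y)) volume (1/2) 1 := by
    have h2 := (if3.comp_sub_left 1).symm
    norm_num at h2
    exact h2
  -- IntegrableOn versions over Ioo
  have iog1 : IntegrableOn g₁ (Set.Ioo 0 x) volume := by
    have h := intervalIntegrable_iff.1 ig1
    rw [uIoc_of_le hx0.le] at h
    exact h.mono_set Set.Ioo_subset_Ioc_self
  have iop1 : IntegrableOn φ₁ (Set.Ioo 0 x) volume := by
    have h := intervalIntegrable_iff.1 ip1
    rw [uIoc_of_le hx0.le] at h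
    exact h.mono_set Set.Ioo_subset_Ioc_self
  have iog3 : IntegrableOn g₃ (Set.Ioo (1/2) 1) volume := by
    have h := intervalIntegrable_iff.1 ig3
    rw [uIoc_of_le (by norm_num : (1/2:ℝ) ≤ 1)] at h
    exact h.mono_set Set.Ioo_subset_Ioc_self
  have iopsi : IntegrableOn (fun y => f₃ (1-y)) (Set.Ioo (1/2) 1) volume := by
    have h := intervalIntegrable_iff.1 ipsi
    rw [uIoc_of_le (by norm_num : (1/2:ℝ) ≤ 1)] at h
    exact h.mono_set Set.Ioo_subset_Ioc_self
  -- interval integrability of g on the three pieces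
  have igg1 : IntervalIntegrable g volume 0 x := by
    rw [intervalIntegrable_iff, uIoc_of_le hx0.le]
    show Integrable g (volume.restrict (Set.Ioc 0 x))
    rw [← Measure.restrict_congr_set Ioo_ae_eq_Ioc]
    exact iog1.congr_fun hEq1.symm measurableSet_Ioo
  have igg2 : IntervalIntegrable g volume x (1/2) := by
    rw [intervalIntegrable_iff, uIoc_of_le hx2]
    show Integrable g (volume.restrict (Set.Ioc x (1/2)))
    rw [← Measure.restrict_congr_set Ioo_ae_eq_Ioc]
    have h := intervalIntegrable_iff.1 ig2
    rw [uIoc_of_le hx2] at h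
    exact (h.mono_set Set.Ioo_subset_Ioc_self).congr_fun hEq2.symm measurableSet_Ioo
  have igg3 : IntervalIntegrable g volume (1/2) 1 := by
    rw [intervalIntegrable_iff, uIoc_of_le (by norm_num : (1/2:ℝ) ≤ 1)]
    show Integrable g (volume.restrict (Set.Ioc (1/2) 1))
    rw [← Measure.restrict_congr_set Ioo_ae_eq_Ioc]
    exact iog3.congr_fun hEq3.symm measurableSet_Ioo
  -- splitting
  have h12 := integral_add_adjacent_intervals igg1 igg2
  have h123 := integral_add_adjacent_intervals (igg1.trans igg2) igg3
  -- identify the pieces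
  have eqi1 : ∫ y in (0:ℝ)..x, g y = ∫ y in (0:ℝ)..x, g₁ y := by
    rw [integral_of_le hx0.le, integral_of_le hx0.le,
      integral_Ioc_eq_integral_Ioo, integral_Ioc_eq_integral_Ioo]
    exact setIntegral_congr_fun measurableSet_Ioo hEq1
  have eqi2 : ∫ y in x..(1/2:ℝ), g y = ∫ y in x..(1/2:ℝ), g₂ y := by
    rw [integral_of_le hx2, integral_of_le hx2,
      integral_Ioc_eq_integral_Ioo, integral_Ioc_eq_integral_Ioo]
    exact setIntegral_congr_fun measurableSet_Ioo hEq2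
  have eqi3 : ∫ y in (1/2:ℝ)..1, g y = ∫ y in (1/2:ℝ)..1, g₃ y := by
    rw [integral_of_le (by norm_num : (1/2:ℝ) ≤ 1), integral_of_le (by norm_num : (1/2:ℝ) ≤ 1),
      integral_Ioc_eq_integral_Ioo, integral_Ioc_eq_integral_Ioo]
    exact setIntegral_congr_fun measurableSet_Ioo hEq3
  -- monotone bounds on pieces 1 and 3
  have m1 : ∫ y in (0:ℝ)..x, g₁ y ≤ ∫ y in (0:ℝ)..x, φ₁ y := by
    rw [integral_of_le hx0.le, integral_of_le hx0.le,
      integral_Ioc_eq_integral_Ioo, integral_Ioc_eq_integral_Ioo]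
    apply setIntegral_mono_on iog1 iop1 measurableSet_Ioo
    intro y hy
    have hy0 : (0:ℝ) < y := hy.1
    have hy2 : y ≤ 1/2 := le_trans hy.2.le hx2
    have hden : (0:ℝ) < (1-y)^2 := by nlinarith
    have hcore := p5_core hy0.le hy2
    have hdiv : (1-x)/(1-y)^2 ≤ (1-x)*(1 + 2*y + 3*y^2 + 4*y^3 + 5*y^4 + 14*y^5) := by
      rw [div_le_iff₀ hden]
      calc (1-x) = (1-x)*1 := by ring
      _ ≤ (1-x)*((1 + 2*y + 3*y^2 + 4*y^3 + 5*y^4 + 14*y^5)*(1-y)^2) :=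
          mul_le_mul_of_nonneg_left hcore (by linarith)
      _ = (1-x)*(1 + 2*y + 3*y^2 + 4*y^3 + 5*y^4 + 14*y^5)*(1-y)^2 := by ring
    show ((1-x)/(1-y)^2 - x) * (10/Real.sqrt y)
        ≤ ((1-x)*(1 + 2*y + 3*y^2 + 4*y^3 + 5*y^4 + 14*y^5) - x) * (10/Real.sqrt y)
    exact mul_le_mul_of_nonneg_right (by linarith) (by positivity)
  have m3 : ∫ y in (1/2:ℝ)..1, g₃ y ≤ ∫ y in (1/2:ℝ)..1, f₃ (1-y) := by
    rw [integral_of_le (by norm_num : (1/2:ℝ) ≤ 1), integral_of_le (by norm_num : (1/2:ℝ) ≤ 1),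
      integral_Ioc_eq_integral_Ioo, integral_Ioc_eq_integral_Ioo]
    apply setIntegral_mono_on iog3 iopsi measurableSet_Ioo
    intro y hy
    have hy0 : (0:ℝ) < y := by linarith [hy.1]
    have hu0 : (0:ℝ) < 1-y := by linarith [hy.2]
    have hu2 : 1-y ≤ 1/2 := by linarith [hy.1]
    have hcore := p5_core hu0.le hu2
    have ee : (1-(1-y))^2 = y^2 := by ring
    rw [ee] at hcore
    have hdiv : x/y^2 ≤ x*(1 + 2*(1-y) + 3*(1-y)^2 + 4*(1-y)^3 + 5*(1-y)^4 + 14*(1-y)^5) := by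
      rw [div_le_iff₀ (by positivity : (0:ℝ) < y^2)]
      calc x = x*1 := by ring
      _ ≤ x*((1 + 2*(1-y) + 3*(1-y)^2 + 4*(1-y)^3 + 5*(1-y)^4 + 14*(1-y)^5)*y^2) :=
          mul_le_mul_of_nonneg_left hcore hx0.le
      _ = x*(1 + 2*(1-y) + 3*(1-y)^2 + 4*(1-y)^3 + 5*(1-y)^4 + 14*(1-y)^5)*y^2 := by ring
    have step : g₃ y ≤ (x*(1 + 2*(1-y) + 3*(1-y)^2 + 4*(1-y)^3 + 5*(1-y)^4 + 14*(1-y)^5) - x)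
        * (10/Real.sqrt (1-y)) := by
      show (x/y^2 - x) * (10/Real.sqrt (1-y)) ≤ _
      exact mul_le_mul_of_nonneg_right (by linarith) (by positivity)
    refine le_trans step (le_of_eq ?_)
    show _ = (10*x) * (Real.sqrt (1-y) * (2 + 3*(1-y) + 4*(1-y)^2 + 5*(1-y)^3 + 14*(1-y)^4))
    obtain ⟨s, hs0, hsq, hyy⟩ := sqrt_sub hu0
    rw [hsq, hyy]
    field_simp
    ring
  -- exact evaluations
  have c1 : ∫ y in (0:ℝ)..x, φ₁ y
      = (20-40*x)*Real.sqrt x + 10*(1-x)*(((4/3)*x + (6/5)*x^2 + (8/7)*x^3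
          + (10/9)*x^4 + (28/11)*x^5) * Real.sqrt x) := by
    have hc : ContinuousOn (fun y => (20-40*x)*Real.sqrt y + 10*(1-x)*(((4/3)*y + (6/5)*y^2
        + (8/7)*y^3 + (10/9)*y^4 + (28/11)*y^5) * Real.sqrt y)) (Set.Icc 0 x) := by
      apply Continuous.continuousOn
      fun_prop
    have hd : ∀ y ∈ Set.Ioo (0:ℝ) x, HasDerivAt (fun y => (20-40*x)*Real.sqrt y
        + 10*(1-x)*(((4/3)*y + (6/5)*y^2 + (8/7)*y^3 + (10/9)*y^4 + (28/11)*y^5) * Real.sqrt y))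
        (φ₁ y) y := by
      intro y hy
      have hy0 : (0:ℝ) < y := hy.1
      have h := ((Real.hasDerivAt_sqrt hy0.ne').const_mul (20-40*x)).add
        ((hasDerivAt_Asqrt hy0).const_mul (10*(1-x)))
      refine h.congr_deriv (Eq.symm ?_)
      show ((1-x)*(1 + 2*y + 3*y^2 + 4*y^3 + 5*y^4 + 14*y^5) - x) * (10/Real.sqrt y) = _
      obtain ⟨s, hs0, hsq, hyy⟩ := sqrt_sub hy0
      rw [hsq, hyy]
      field_simp
      ring
    have := ftc_right hx0.le hc hd ip1
    rw [this]
    simp [Real.sqrt_zero]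
  have c2 : ∫ y in x..(1/2:ℝ), g₂ y
      = (-((20*x/3) * (1/((1/2)*Real.sqrt (1/2)))) - 20*x*Real.sqrt (1/2))
        - (-((20*x/3) * (1/(x*Real.sqrt x))) - 20*x*Real.sqrt x) := by
    have hd : ∀ y ∈ Set.uIcc x (1/2:ℝ), HasDerivAt (fun y => -((20*x/3) * (1/(y*Real.sqrt y)))
        - 20*x*Real.sqrt y) (g₂ y) y := by
      intro y hy
      rw [Set.uIcc_of_le hx2] at hy
      have hy0 : (0:ℝ) < y := lt_of_lt_of_le hx0 hy.1
      have h := (((hasDerivAt_inv_ysqrt hy0).const_mul (20*x/3)).neg).sub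
        ((Real.hasDerivAt_sqrt hy0.ne').const_mul (20*x))
      refine h.congr_deriv (Eq.symm ?_)
      show (x/y^2 - x) * (10/Real.sqrt y) = _
      obtain ⟨s, hs0, hsq, hyy⟩ := sqrt_sub hy0
      rw [hsq, hyy]
      field_simp
      ring
    exact intervalIntegral.integral_eq_sub_of_hasDerivAt hd ig2
  have c3 : ∫ y in (1/2:ℝ)..1, f₃ (1-y)
      = 10*x*(((4/3)*(1/2) + (6/5)*(1/2)^2 + (8/7)*(1/2)^3 + (10/9)*(1/2)^4
          + (28/11)*(1/2)^5) * Real.sqrt (1/2)) := by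
    have hcomp : (∫ y in (1/2:ℝ)..1, f₃ (1-y)) = ∫ u in (0:ℝ)..(1/2:ℝ), f₃ u := by
      rw [intervalIntegral.integral_comp_sub_left f₃ 1]
      norm_num
    rw [hcomp]
    have hc : ContinuousOn (fun u => 10*x*(((4/3)*u + (6/5)*u^2 + (8/7)*u^3 + (10/9)*u^4
        + (28/11)*u^5) * Real.sqrt u)) (Set.Icc 0 (1/2:ℝ)) := by
      apply Continuous.continuousOn
      fun_prop
    have hd : ∀ u ∈ Set.Ioo (0:ℝ) (1/2:ℝ), HasDerivAt (fun u => 10*x*(((4/3)*u + (6/5)*u^2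
        + (8/7)*u^3 + (10/9)*u^4 + (28/11)*u^5) * Real.sqrt u)) (f₃ u) u := by
      intro u hu
      exact (hasDerivAt_Asqrt hu.1).const_mul (10*x)
    have := ftc_right (by norm_num : (0:ℝ) ≤ 1/2) hc hd if3
    rw [this]
    simp [Real.sqrt_zero]
  -- final assembly
  have ht : (0:ℝ) < Real.sqrt x := Real.sqrt_pos.2 hx0
  have htt : Real.sqrt x * Real.sqrt x = x := Real.mul_self_sqrt hx0.le
  have hr : (0:ℝ) < Real.sqrt (1/2:ℝ) := Real.sqrt_pos.2 (by norm_num)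
  have hr2 : Real.sqrt (1/2:ℝ) * Real.sqrt (1/2:ℝ) = 1/2 := Real.mul_self_sqrt (by norm_num)
  have hfin := final_ineq ht (by rw [htt]; exact hx2) hr hr2
  rw [htt] at hfin
  rw [hmin, hVd, hVx]
  rw [← h123, ← h12, eqi1, eqi2, eqi3]
  calc x * 1 + (((∫ y in (0:ℝ)..x, g₁ y) + ∫ y in x..(1/2:ℝ), g₂ y) + ∫ y in (1/2:ℝ)..1, g₃ y)
      ≤ x * 1 + (((∫ y in (0:ℝ)..x, φ₁ y) + ∫ y in x..(1/2:ℝ), g₂ y)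
          + ∫ y in (1/2:ℝ)..1, f₃ (1-y)) := by linarith [m1, m3]
    _ ≤ 0.85 * (10/Real.sqrt x) := by
        rw [c1, c2, c3]
        linarith [hfin]



/-- Drift condition for the killed Markov chain: with the kernel
p(x,dy) = (x∧(1-x))·δ_∂ + [((1-x)/(1-y)²)·1_{y∈(0,x)} + (x/y²)·1_{y∈(x,1)} - (x∧(1-x))] dy
on (0,1) ∪ {∂} (∂ encoded as `none`, p(∂,·) = δ_∂), and the potential
V(∂) = 1, V(x) = (10/√x)·1_{x∈(0,1/2)} + (10/√(1-x))·1_{x∈[1/2,1)},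
one has ∫ p(x,dy) V(y) ≤ 0.85·V(x) + 1_{∂}(x) for every x ∈ (0,1) ∪ {∂}. -/
theorem stmt9 (V : Option ℝ → ℝ)
    (hVd : V none = 1)
    (hV1 : ∀ y ∈ Set.Ioo (0:ℝ) (1/2), V (some y) = 10 / Real.sqrt y)
    (hV2 : ∀ y ∈ Set.Ico (1/2:ℝ) 1, V (some y) = 10 / Real.sqrt (1 - y)) :
    (∀ x ∈ Set.Ioo (0:ℝ) 1,
      (min x (1 - x)) * V none
        + (∫ y in (0:ℝ)..1,
            ((if y < x then (1 - x) / (1 - y) ^ 2 else 0)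
              + (if x < y then x / y ^ 2 else 0) - min x (1 - x)) * V (some y))
      ≤ 0.85 * V (some x))
    ∧ V none ≤ 0.85 * V none + 1 := by
  refine ⟨?_, by rw [hVd]; norm_num⟩
  intro x hx
  rcases le_or_gt x (1/2) with hx2 | hx2
  · exact main_half V hVd hV1 hV2 hx.1 hx2
  · have hx1 : x < 1 := hx.2
    set W : Option ℝ → ℝ := fun o => V (Option.map (fun z => 1 - z) o) with hWdef
    have hWd : W none = 1 := hVd
    have hW1 : ∀ y ∈ Set.Ioo (0:ℝ) (1/2), W (some y) = 10 / Real.sqrt y := by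
      intro y hy
      show V (some (1-y)) = _
      rw [hV2 (1-y) ⟨by linarith [hy.2], by linarith [hy.1]⟩,
        show (1:ℝ)-(1-y) = y by ring]
    have hW2 : ∀ y ∈ Set.Ico (1/2:ℝ) 1, W (some y) = 10 / Real.sqrt (1-y) := by
      intro y hy
      show V (some (1-y)) = _
      rcases eq_or_lt_of_le hy.1 with h | h
      · have e : (1:ℝ)-y = 1/2 := by rw [← h]; norm_num
        rw [e, hV2 (1/2) ⟨le_rfl, by norm_num⟩]
        norm_num
      · exact hV1 (1-y) ⟨by linarith [hy.2], by linarith⟩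
    have h := main_half W hWd hW1 hW2 (x := 1-x) (by linarith) (by linarith)
    have emin : min (1-x) (1-(1-x)) = min x (1-x) := by
      rw [show (1:ℝ)-(1-x) = x by ring, min_comm]
    have eA : min (1-x) (1-(1-x)) * W none = min x (1-x) * V none := by
      rw [emin]; rfl
    have eC : (0.85:ℝ) * W (some (1-x)) = 0.85 * V (some x) := by
      show (0.85:ℝ) * V (some (1-(1-x))) = _
      rw [show (1:ℝ)-(1-x) = x by ring]
    have eint : (∫ y in (0:ℝ)..1,
        ((if y < 1-x then (1-(1-x))/(1-y)^2 else 0) + (if 1-x < y then (1-x)/y^2 else 0)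
          - min (1-x) (1-(1-x))) * W (some y))
        = ∫ y in (0:ℝ)..1,
        ((if y < x then (1-x)/(1-y)^2 else 0) + (if x < y then x/y^2 else 0)
          - min x (1-x)) * V (some y) := by
      let G : ℝ → ℝ := fun z =>
        ((if z < x then (1-x)/(1-z)^2 else 0) + (if x < z then x/z^2 else 0)
          - min x (1-x)) * V (some z)
      have e2 : ∀ y : ℝ, ((if y < 1-x then (1-(1-x))/(1-y)^2 else 0)
          + (if 1-x < y then (1-x)/y^2 else 0) - min (1-x) (1-(1-x))) * W (some y)
          = G (1-y) := by
        intro y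
        show _ = ((if 1-y < x then (1-x)/(1-(1-y))^2 else 0)
          + (if x < 1-y then x/(1-y)^2 else 0) - min x (1-x)) * V (some (1-y))
        have c1 : (y < 1-x) = (x < 1-y) := propext ⟨fun h => by linarith, fun h => by linarith⟩
        have c2 : ((1:ℝ)-x < y) = (1-y < x) := propext ⟨fun h => by linarith, fun h => by linarith⟩
        simp only [c1, c2, show min (1-x) x = min x (1-x) from min_comm _ _, show (1:ℝ)-(1-x) = x by ring, show (1:ℝ)-(1-y) = y by ring]
        show _ * V (some (1-y)) = _
        ring
      calc (∫ y in (0:ℝ)..1,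
          ((if y < 1-x then (1-(1-x))/(1-y)^2 else 0) + (if 1-x < y then (1-x)/y^2 else 0)
            - min (1-x) (1-(1-x))) * W (some y))
          = ∫ y in (0:ℝ)..1, G (1-y) := intervalIntegral.integral_congr (fun y _ => e2 y)
        _ = ∫ y in (1-1:ℝ)..(1-0:ℝ), G y := intervalIntegral.integral_comp_sub_left G 1
        _ = ∫ y in (0:ℝ)..1, G y := by norm_num
    rw [← eA, ← eint, ← eC]
    exact h
end

section
/- For β* = (√17-3)/2, the function p₀(x) = (x(1-x))^{β*/2} satisfies the integral equation p₀(x) = (2/(β*+1)) · [x^{β*+1} ∫ₓ¹ p₀(y)/y^{β*+2} dy + (1-x)^{β*+1} ∫₀ˣ p₀(y)/(1-y)^{β*+2} dy] for all x ∈ (0,1). -/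
open MeasureTheory intervalIntegral

lemma aux_int1 (b x : ℝ) (hb0 : 0 < b) (hx0 : 0 < x) (hx1 : x < 1) :
    ∫ y in x..1, (y * (1 - y)) ^ (b / 2) / y ^ (b + 2)
      = (b / 2 + 1)⁻¹ * (x ^ (-(b / 2) - 1) * (1 - x) ^ (b / 2 + 1)) := by
  have hbd : (0:ℝ) < b / 2 + 1 := by linarith
  have key : ∀ y ∈ Set.uIcc x 1,
      HasDerivAt (fun t : ℝ => -((b / 2 + 1)⁻¹ * (t ^ (-(b / 2) - 1) * (1 - t) ^ (b / 2 + 1))))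
        ((y * (1 - y)) ^ (b / 2) / y ^ (b + 2)) y := by
    intro y hy
    rw [Set.uIcc_of_le hx1.le] at hy
    have hy0 : 0 < y := lt_of_lt_of_le hx0 hy.1
    have h1y : 0 ≤ 1 - y := by linarith [hy.2]
    have h1 : HasDerivAt (fun t : ℝ => t ^ (-(b / 2) - 1))
        ((-(b / 2) - 1) * y ^ (-(b / 2) - 1 - 1)) y :=
      Real.hasDerivAt_rpow_const (Or.inl hy0.ne')
    have h2 : HasDerivAt (fun t : ℝ => 1 - t) (-1) y := by
      simpa using (hasDerivAt_id y).const_sub 1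
    have h3 : HasDerivAt (fun t : ℝ => t ^ (b / 2 + 1))
        ((b / 2 + 1) * (1 - y) ^ (b / 2 + 1 - 1)) (1 - y) :=
      Real.hasDerivAt_rpow_const (Or.inr (by linarith))
    have h4 := h3.comp y h2
    have h5 := ((h1.mul h4).const_mul ((b / 2 + 1)⁻¹)).neg
    convert h5 using 1
    · rfl
    · rfl
    · rfl
    simp only [Function.comp_apply]
    have hf : (y * (1 - y)) ^ (b / 2) / y ^ (b + 2)
        = y ^ (b / 2 - (b + 2)) * (1 - y) ^ (b / 2) := by
      rw [Real.mul_rpow hy0.le h1y, Real.rpow_sub hy0]; ring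
    have e3 : (1 - y) ^ (b / 2 + 1) = (1 - y) ^ (b / 2) * (1 - y) := by
      rw [Real.rpow_add' h1y (by positivity), Real.rpow_one]
    have e4 : y ^ (-(b / 2) - 1) = y ^ (b / 2 - (b + 2)) * y := by
      rw [show -(b / 2) - 1 = (b / 2 - (b + 2)) + 1 by ring, Real.rpow_add hy0, Real.rpow_one]
    have e5 : y ^ (-(b / 2) - 1 - 1) = y ^ (b / 2 - (b + 2)) := by
      congr 1; ring
    have e6 : (1 - y) ^ (b / 2 + 1 - 1) = (1 - y) ^ (b / 2) := by
      congr 1; ring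
    rw [hf, e3, e4, e5, e6]
    have hne : (b / 2 + 1) ≠ 0 := hbd.ne'
    field_simp
    ring
  have hcont : IntervalIntegrable
      (fun y : ℝ => (y * (1 - y)) ^ (b / 2) / y ^ (b + 2)) volume x 1 := by
    apply ContinuousOn.intervalIntegrable
    apply ContinuousOn.div
    · apply ContinuousOn.rpow_const
      · exact (continuousOn_id.mul ((continuous_const.sub continuous_id).continuousOn))
      · intro y hy; exact Or.inr (by positivity)
    · apply ContinuousOn.rpow_const continuousOn_id
      intro y hy; exact Or.inr (by positivity)
    · intro y hy
      rw [Set.uIcc_of_le hx1.le] at hy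
      exact (Real.rpow_pos_of_pos (lt_of_lt_of_le hx0 hy.1) _).ne'
  rw [intervalIntegral.integral_eq_sub_of_hasDerivAt key hcont]
  have h0 : (1 - (1:ℝ)) ^ (b / 2 + 1) = 0 := by
    rw [sub_self, Real.zero_rpow hbd.ne']
  rw [h0]
  ring

lemma aux_int2 (b x : ℝ) (hb0 : 0 < b) (hx0 : 0 < x) (hx1 : x < 1) :
    ∫ y in (0:ℝ)..x, (y * (1 - y)) ^ (b / 2) / (1 - y) ^ (b + 2)
      = (b / 2 + 1)⁻¹ * ((1 - x) ^ (-(b / 2) - 1) * x ^ (b / 2 + 1)) := by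
  have hbd : (0:ℝ) < b / 2 + 1 := by linarith
  have key : ∀ y ∈ Set.uIcc (0:ℝ) x,
      HasDerivAt (fun t : ℝ => (b / 2 + 1)⁻¹ * ((1 - t) ^ (-(b / 2) - 1) * t ^ (b / 2 + 1)))
        ((y * (1 - y)) ^ (b / 2) / (1 - y) ^ (b + 2)) y := by
    intro y hy
    rw [Set.uIcc_of_le hx0.le] at hy
    have hy0 : 0 ≤ y := hy.1
    have h1y : 0 < 1 - y := by linarith [lt_of_le_of_lt hy.2 hx1]
    have h2 : HasDerivAt (fun t : ℝ => 1 - t) (-1) y := by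
      simpa using (hasDerivAt_id y).const_sub 1
    have h3 : HasDerivAt (fun t : ℝ => t ^ (-(b / 2) - 1))
        ((-(b / 2) - 1) * (1 - y) ^ (-(b / 2) - 1 - 1)) (1 - y) :=
      Real.hasDerivAt_rpow_const (Or.inl h1y.ne')
    have h4 := h3.comp y h2
    have h1 : HasDerivAt (fun t : ℝ => t ^ (b / 2 + 1))
        ((b / 2 + 1) * y ^ (b / 2 + 1 - 1)) y :=
      Real.hasDerivAt_rpow_const (Or.inr (by linarith))
    have h5 := (h4.mul h1).const_mul ((b / 2 + 1)⁻¹)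
    convert h5 using 1
    · rfl
    · rfl
    · rfl
    simp only [Function.comp_apply]
    have hf : (y * (1 - y)) ^ (b / 2) / (1 - y) ^ (b + 2)
        = y ^ (b / 2) * (1 - y) ^ (b / 2 - (b + 2)) := by
      rw [Real.mul_rpow hy0 h1y.le, Real.rpow_sub h1y]; ring
    have e3 : y ^ (b / 2 + 1) = y ^ (b / 2) * y := by
      rw [Real.rpow_add' hy0 (by positivity), Real.rpow_one]
    have e4 : (1 - y) ^ (-(b / 2) - 1) = (1 - y) ^ (b / 2 - (b + 2)) * (1 - y) := by
      rw [show -(b / 2) - 1 = (b / 2 - (b + 2)) + 1 by ring, Real.rpow_add h1y, Real.rpow_one]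
    have e5 : (1 - y) ^ (-(b / 2) - 1 - 1) = (1 - y) ^ (b / 2 - (b + 2)) := by
      congr 1; ring
    have e6 : y ^ (b / 2 + 1 - 1) = y ^ (b / 2) := by
      congr 1; ring
    rw [hf, e3, e4, e5, e6]
    have hne : (b / 2 + 1) ≠ 0 := hbd.ne'
    field_simp
    ring
  have hcont : IntervalIntegrable
      (fun y : ℝ => (y * (1 - y)) ^ (b / 2) / (1 - y) ^ (b + 2)) volume 0 x := by
    apply ContinuousOn.intervalIntegrable
    apply ContinuousOn.div
    · apply ContinuousOn.rpow_const
      · exact (continuousOn_id.mul ((continuous_const.sub continuous_id).continuousOn))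
      · intro y hy; exact Or.inr (by positivity)
    · apply ContinuousOn.rpow_const ((continuous_const.sub continuous_id).continuousOn)
      intro y hy; exact Or.inr (by positivity)
    · intro y hy
      rw [Set.uIcc_of_le hx0.le] at hy
      have : (0:ℝ) < 1 - y := by linarith [lt_of_le_of_lt hy.2 hx1]
      exact (Real.rpow_pos_of_pos this _).ne'
  rw [intervalIntegral.integral_eq_sub_of_hasDerivAt key hcont]
  have h0 : (0:ℝ) ^ (b / 2 + 1) = 0 := Real.zero_rpow hbd.ne'
  rw [h0]
  ring

/-- For β* = (√17-3)/2, the function p₀(x) = (x(1-x))^{β*/2} satisfies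
p₀(x) = (2/(β*+1))·[x^{β*+1} ∫ₓ¹ p₀(y)/y^{β*+2} dy + (1-x)^{β*+1} ∫₀ˣ p₀(y)/(1-y)^{β*+2} dy]
for all x ∈ (0,1). -/
theorem stmt10 (x : ℝ) (hx : x ∈ Set.Ioo (0:ℝ) 1) :
    (x * (1 - x)) ^ (((Real.sqrt 17 - 3) / 2) / 2)
    = (2 / ((Real.sqrt 17 - 3) / 2 + 1))
        * (x ^ ((Real.sqrt 17 - 3) / 2 + 1)
            * (∫ y in x..1, (y * (1 - y)) ^ (((Real.sqrt 17 - 3) / 2) / 2)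
                  / y ^ ((Real.sqrt 17 - 3) / 2 + 2))
          + (1 - x) ^ ((Real.sqrt 17 - 3) / 2 + 1)
            * (∫ y in (0:ℝ)..x, (y * (1 - y)) ^ (((Real.sqrt 17 - 3) / 2) / 2)
                  / (1 - y) ^ ((Real.sqrt 17 - 3) / 2 + 2))) := by
  obtain ⟨hx0, hx1⟩ := hx
  set b : ℝ := (Real.sqrt 17 - 3) / 2 with hb
  have hs : Real.sqrt 17 ^ 2 = 17 := Real.sq_sqrt (by norm_num)
  have hs3 : (3:ℝ) < Real.sqrt 17 := by
    have := Real.lt_sqrt (x := 3) (y := 17) (by norm_num)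
    rw [this]; norm_num
  have hb0 : 0 < b := by rw [hb]; linarith
  have hb2 : b ^ 2 + 3 * b = 2 := by
    rw [hb]; field_simp; nlinarith [hs]
  have h1x : (0:ℝ) < 1 - x := by linarith
  rw [aux_int1 b x hb0 hx0 hx1, aux_int2 b x hb0 hx0 hx1]
  have hbd : (0:ℝ) < b / 2 + 1 := by linarith
  have e1 : x ^ (b + 1) * ((b / 2 + 1)⁻¹ * (x ^ (-(b / 2) - 1) * (1 - x) ^ (b / 2 + 1)))
      = (b / 2 + 1)⁻¹ * (x ^ (b / 2) * ((1 - x) ^ (b / 2) * (1 - x))) := by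
    have hA : x ^ (b + 1) * x ^ (-(b / 2) - 1) = x ^ (b / 2) := by
      rw [← Real.rpow_add hx0]; congr 1; ring
    have h2 : (1 - x) ^ (b / 2 + 1) = (1 - x) ^ (b / 2) * (1 - x) := by
      rw [Real.rpow_add h1x, Real.rpow_one]
    rw [h2, ← hA]; ring
  have e2 : (1 - x) ^ (b + 1) * ((b / 2 + 1)⁻¹ * ((1 - x) ^ (-(b / 2) - 1) * x ^ (b / 2 + 1)))
      = (b / 2 + 1)⁻¹ * ((1 - x) ^ (b / 2) * (x ^ (b / 2) * x)) := by
    have hA : (1 - x) ^ (b + 1) * (1 - x) ^ (-(b / 2) - 1) = (1 - x) ^ (b / 2) := by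
      rw [← Real.rpow_add h1x]; congr 1; ring
    have h2 : x ^ (b / 2 + 1) = x ^ (b / 2) * x := by
      rw [Real.rpow_add hx0, Real.rpow_one]
    rw [h2, ← hA]; ring
  rw [e1, e2]
  have emul : (x * (1 - x)) ^ (b / 2) = x ^ (b / 2) * (1 - x) ^ (b / 2) :=
    Real.mul_rpow hx0.le h1x.le
  rw [emul]
  have hbne : b + 1 ≠ 0 := by positivity
  have hbdne : b / 2 + 1 ≠ 0 := hbd.ne'
  have hkey : 2 / (b + 1) * (b / 2 + 1)⁻¹ = 1 := by
    have h4 : (b + 1) * (b / 2 + 1) = 2 := by nlinarith [hb2]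
    field_simp
    nlinarith [hb2]
  have hfin : 2 / (b + 1)
        * ((b / 2 + 1)⁻¹ * (x ^ (b / 2) * ((1 - x) ^ (b / 2) * (1 - x)))
          + (b / 2 + 1)⁻¹ * ((1 - x) ^ (b / 2) * (x ^ (b / 2) * x)))
      = (2 / (b + 1) * (b / 2 + 1)⁻¹) * (x ^ (b / 2) * (1 - x) ^ (b / 2)) * ((1 - x) + x) := by
    ring
  rw [hfin, hkey]
  ring_nf
end

section
/- For every y ∈ (0,1), ∫₀¹ g_x(y) dx = 1, where g_x(y) = (2/(β*+1))·[x^{β*+1}/y^{β*+2}·1_{x<y} + (1-x)^{β*+1}/(1-y)^{β*+2}·1_{y<x}] and β* = (√17-3)/2. -/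
open MeasureTheory intervalIntegral

/-- For β* = (√17-3)/2 and every y ∈ (0,1), ∫₀¹ g_x(y) dx = 1, where
g_x(y) = (2/(β*+1))·[x^{β*+1}/y^{β*+2}·1_{x<y} + (1-x)^{β*+1}/(1-y)^{β*+2}·1_{y<x}]. -/
theorem stmt11 (y : ℝ) (hy : y ∈ Set.Ioo (0:ℝ) 1) :
    ∫ x in (0:ℝ)..1,
      (2 / ((Real.sqrt 17 - 3) / 2 + 1))
        * ((if x < y then x ^ ((Real.sqrt 17 - 3) / 2 + 1) / y ^ ((Real.sqrt 17 - 3) / 2 + 2) else 0)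
          + (if y < x then (1 - x) ^ ((Real.sqrt 17 - 3) / 2 + 1)
                / (1 - y) ^ ((Real.sqrt 17 - 3) / 2 + 2) else 0))
    = 1 := by
  obtain ⟨hy0, hy1⟩ := hy
  set p : ℝ := (Real.sqrt 17 - 3) / 2 with hp
  have hA : Real.sqrt 17 ^ 2 = 17 := Real.sq_sqrt (by norm_num)
  have hApos : (4:ℝ) < Real.sqrt 17 := by nlinarith [Real.sqrt_nonneg 17]
  have hp0 : 0 < p := by rw [hp]; nlinarith
  have hp1 : (0:ℝ) < p + 1 := by linarith
  have hp2 : (0:ℝ) < p + 2 := by linarith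
  set c : ℝ := 2 / (p + 1) with hc
  have key : (p + 1) * (p + 2) = 4 := by rw [hp]; nlinarith
  have h1 : (∫ x in (0:ℝ)..y,
      c * ((if x < y then x ^ (p+1) / y ^ (p+2) else 0)
        + (if y < x then (1 - x) ^ (p+1) / (1 - y) ^ (p+2) else 0)))
      = c / (p + 2) := by
    have hcongr : (∫ x in (0:ℝ)..y,
        c * ((if x < y then x ^ (p+1) / y ^ (p+2) else 0)
          + (if y < x then (1 - x) ^ (p+1) / (1 - y) ^ (p+2) else 0)))
        = ∫ x in (0:ℝ)..y, c * (x ^ (p+1) / y ^ (p+2)) := by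
      apply intervalIntegral.integral_congr_ae
      have hne : ∀ᵐ x : ℝ, x ≠ y := by
        rw [MeasureTheory.ae_iff]
        simp [Set.setOf_eq_eq_singleton']
      filter_upwards [hne] with x hx hxI
      rw [Set.uIoc_of_le hy0.le] at hxI
      have hxy : x < y := lt_of_le_of_ne hxI.2 hx
      rw [if_pos hxy, if_neg (not_lt.2 hxI.2), add_zero]
    rw [hcongr]
    rw [intervalIntegral.integral_const_mul]
    simp only [div_eq_mul_inv]
    rw [intervalIntegral.integral_mul_const]
    rw [integral_rpow (Or.inl (by linarith))]
    have h0 : (0:ℝ) ^ (p + 1 + 1) = 0 := Real.zero_rpow (by positivity)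
    have hyy : y ^ (p + 1 + 1) = y ^ (p + 2) := by ring_nf
    rw [h0, hyy, sub_zero]
    have hyp : (0:ℝ) < y ^ (p + 2) := Real.rpow_pos_of_pos hy0 _
    field_simp
    ring
  have h2 : (∫ x in y..(1:ℝ),
      c * ((if x < y then x ^ (p+1) / y ^ (p+2) else 0)
        + (if y < x then (1 - x) ^ (p+1) / (1 - y) ^ (p+2) else 0)))
      = c / (p + 2) := by
    have hcongr : (∫ x in y..(1:ℝ),
        c * ((if x < y then x ^ (p+1) / y ^ (p+2) else 0)
          + (if y < x then (1 - x) ^ (p+1) / (1 - y) ^ (p+2) else 0)))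
        = ∫ x in y..(1:ℝ), c * ((1 - x) ^ (p+1) / (1 - y) ^ (p+2)) := by
      apply intervalIntegral.integral_congr_ae
      filter_upwards with x hxI
      rw [Set.uIoc_of_le hy1.le] at hxI
      rw [if_pos hxI.1, if_neg (not_lt.2 hxI.1.le), zero_add]
    rw [hcongr]
    rw [intervalIntegral.integral_const_mul]
    simp only [div_eq_mul_inv]
    rw [intervalIntegral.integral_mul_const]
    have hsub : (∫ x in y..(1:ℝ), (1 - x) ^ (p+1))
        = ∫ x in (0:ℝ)..(1 - y), x ^ (p+1) := by
      have := intervalIntegral.integral_comp_sub_left (a := y) (b := 1)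
        (fun x => x ^ (p+1)) 1
      simpa using this
    rw [hsub]
    rw [integral_rpow (Or.inl (by linarith))]
    have h0 : (0:ℝ) ^ (p + 1 + 1) = 0 := Real.zero_rpow (by positivity)
    have hyy : (1 - y) ^ (p + 1 + 1) = (1 - y) ^ (p + 2) := by ring_nf
    rw [h0, hyy, sub_zero]
    have hyp : (0:ℝ) < (1 - y) ^ (p + 2) := Real.rpow_pos_of_pos (by linarith) _
    field_simp
    ring
  have hcont1 : Continuous (fun x : ℝ => c * (x ^ (p+1) / y ^ (p+2))) := by
    exact continuous_const.mul ((Real.continuous_rpow_const hp1.le).div_const _)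
  have hcont2 : Continuous (fun x : ℝ => c * ((1 - x) ^ (p+1) / (1 - y) ^ (p+2))) := by
    exact continuous_const.mul
      (((Real.continuous_rpow_const hp1.le).comp (continuous_const.sub continuous_id)).div_const _)
  have hne : ∀ᵐ x : ℝ, x ≠ y := by
    rw [MeasureTheory.ae_iff]
    simp [Set.setOf_eq_eq_singleton']
  have hi1 : IntervalIntegrable (fun x => c * ((if x < y then x ^ (p+1) / y ^ (p+2) else 0)
      + (if y < x then (1 - x) ^ (p+1) / (1 - y) ^ (p+2) else 0))) volume 0 y := by
    apply (hcont1.intervalIntegrable 0 y).congr_ae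
    filter_upwards [MeasureTheory.ae_restrict_mem measurableSet_uIoc,
      MeasureTheory.ae_restrict_of_ae hne] with x hxI hx
    rw [Set.uIoc_of_le hy0.le] at hxI
    have hxy : x < y := lt_of_le_of_ne hxI.2 hx
    rw [if_pos hxy, if_neg (not_lt.2 hxI.2), add_zero]
  have hi2 : IntervalIntegrable (fun x => c * ((if x < y then x ^ (p+1) / y ^ (p+2) else 0)
      + (if y < x then (1 - x) ^ (p+1) / (1 - y) ^ (p+2) else 0))) volume y 1 := by
    apply (hcont2.intervalIntegrable y 1).congr_ae
    filter_upwards [MeasureTheory.ae_restrict_mem measurableSet_uIoc] with x hxI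
    rw [Set.uIoc_of_le hy1.le] at hxI
    rw [if_pos hxI.1, if_neg (not_lt.2 hxI.1.le), zero_add]
  have hsplit := intervalIntegral.integral_add_adjacent_intervals hi1 hi2
  rw [← hsplit, h1, h2]
  rw [hc]
  field_simp
  nlinarith
end

section
/- For p > 1 sufficiently close to 1, the quantity 2·(2/((β*p+1)(β*p+2)))^{1/p} · 1.15^{1/p - 1} is strictly less than 1, where β* = (√17-3)/2. -/
set_option maxHeartbeats 1000000

open Real

lemma log_forty_div : Real.log (40/23) ≤ 0.56 := by
  rw [Real.log_le_iff_le_exp (by norm_num)]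
  have h1 : (1 + 0.56/64 : ℝ) ≤ Real.exp (0.56/64) := by
    have := Real.add_one_le_exp (0.56/64:ℝ); linarith
  have h2 : ((1 + 0.56/64 : ℝ)) ^ (64:ℕ) ≤ (Real.exp (0.56/64)) ^ (64:ℕ) :=
    pow_le_pow_left₀ (by norm_num) h1 64
  rw [← Real.exp_nat_mul] at h2
  have : (40/23 : ℝ) ≤ (1 + 0.56/64 : ℝ) ^ (64:ℕ) := by norm_num
  calc (40/23:ℝ) ≤ (1 + 0.56/64 : ℝ) ^ (64:ℕ) := this
    _ ≤ Real.exp ((64:ℕ) * (0.56/64)) := h2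
    _ = Real.exp 0.56 := by norm_num

lemma exp_quad {x : ℝ} (h0 : 0 ≤ x) (h1 : x ≤ 1) : Real.exp x ≤ 1 + x + (5/4) * x^2 := by
  have := Real.exp_bound' h0 h1 (n := 2) (by norm_num)
  simp [Finset.sum_range_succ, Nat.factorial] at this
  nlinarith [this]

/-- For β* = (√17-3)/2 and p > 1 sufficiently close to 1,
2·(2/((β*p+1)(β*p+2)))^{1/p} · 1.15^{1/p - 1} < 1. -/
theorem stmt15 :
    ∃ δ > (0:ℝ), ∀ p : ℝ, 1 < p → p < 1 + δ →
      2 * (2 / ((((Real.sqrt 17 - 3) / 2) * p + 1) * (((Real.sqrt 17 - 3) / 2) * p + 2)))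
            ^ (1 / p)
        * (1.15 : ℝ) ^ (1 / p - 1) < 1 := by
  refine ⟨1/100, by norm_num, ?_⟩
  intro p hp1 hp2
  have hp0 : (0:ℝ) < p := by linarith
  set s := Real.sqrt 17 with hs
  have hs2 : s ^ 2 = 17 := Real.sq_sqrt (by norm_num)
  have hsnn : 0 ≤ s := Real.sqrt_nonneg _
  have hsub : s < 4.124 := by
    rw [hs, show (4.124:ℝ) = √(4.124^2) by rw [Real.sqrt_sq]; norm_num]
    exact Real.sqrt_lt_sqrt (by norm_num) (by norm_num)
  have hslb : (4.12:ℝ) < s := by nlinarith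
  set β := (s - 3)/2 with hβ
  have hβpos : 0 < β := by rw [hβ]; linarith
  have hβub : β < 0.562 := by rw [hβ]; linarith
  have hkey : β^2 + 3*β = 2 := by rw [hβ]; nlinarith
  set ε := p - 1 with hε
  have hε0 : 0 < ε := by simp [hε]; linarith
  have hε1 : ε < 1/100 := by simp [hε]; linarith
  set D := (β * p + 1) * (β * p + 2) with hD
  have hD4 : D = 4 + (4 - 3*β)*ε + (2 - 3*β)*ε^2 := by
    rw [hD, hε]; linear_combination (p^2) * hkey
  have hDlb : 4 + 2.314 * ε < D := by
    rw [hD4]; nlinarith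
  have hDpos : (0:ℝ) < D := by nlinarith
  -- exponential bound
  have hc : Real.log (40/23) * ε ≤ 0.56 * ε :=
    mul_le_mul_of_nonneg_right log_forty_div hε0.le
  have hcnn : 0 ≤ Real.log (40/23) * ε :=
    mul_nonneg (Real.log_nonneg (by norm_num)) hε0.le
  have hexp : Real.exp (Real.log (40/23) * ε) ≤ 1 + 0.56*ε + (5/4)*(0.56*ε)^2 := by
    have h1 : Real.exp (Real.log (40/23) * ε) ≤ Real.exp (0.56*ε) := Real.exp_le_exp.mpr hc
    have h2 : Real.exp (0.56*ε) ≤ 1 + 0.56*ε + (5/4)*(0.56*ε)^2 :=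
      exp_quad (by nlinarith) (by nlinarith)
    linarith
  have hQ : 4 * Real.exp (Real.log (40/23) * ε) < D := by nlinarith
  -- take logs
  have hlogD : Real.log 4 + Real.log (40/23) * ε < Real.log D := by
    have := Real.log_lt_log (by positivity) hQ
    rwa [Real.log_mul (by norm_num) (Real.exp_ne_zero _), Real.log_exp] at this
  have hlog4 : Real.log 4 = 2 * Real.log 2 := by
    rw [show (4:ℝ) = 2^2 by norm_num, Real.log_pow]; push_cast; ring
  have hlog40 : Real.log (40/23) = Real.log 2 - Real.log (23/20) := by
    rw [show (40/23:ℝ) = 2 / (23/20) by norm_num, Real.log_div (by norm_num) (by norm_num)]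
  -- rewrite the goal via exp
  have hA : (0:ℝ) < 2 / D := by positivity
  rw [Real.rpow_def_of_pos hA, Real.rpow_def_of_pos (by norm_num : (0:ℝ) < 1.15)]
  have h115 : Real.log 1.15 = Real.log (23/20) := by norm_num
  rw [h115, mul_assoc, ← Real.exp_add]
  have hlog2D : Real.log (2 / D) = Real.log 2 - Real.log D :=
    Real.log_div (by norm_num) (ne_of_gt hDpos)
  have hXY : Real.log (2 / D) * (1 / p) + Real.log (23/20) * (1 / p - 1)
      < Real.log (1/2) := by
    rw [hlog2D, show Real.log (1/2:ℝ) = -Real.log 2 by rw [one_div, Real.log_inv]]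
    have key : Real.log 2 * p + (Real.log 2 - Real.log D) + Real.log (23/20) * (1 - p) < 0 := by
      rw [hlog4, hlog40, hε] at hlogD
      linarith
    have hmul : ((Real.log 2 - Real.log D) * (1/p) + Real.log (23/20) * (1/p - 1) + Real.log 2) * p
        = Real.log 2 * p + (Real.log 2 - Real.log D) + Real.log (23/20) * (1 - p) := by
      field_simp; ring
    have h2 : ((Real.log 2 - Real.log D) * (1/p) + Real.log (23/20) * (1/p - 1) + Real.log 2) * p
        < 0 := by rw [hmul]; exact key
    nlinarith [h2, hp0]
  calc 2 * Real.exp (Real.log (2 / D) * (1 / p) + Real.log (23/20) * (1 / p - 1))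
      < 2 * Real.exp (Real.log (1/2)) := by
        have := Real.exp_lt_exp.mpr hXY; linarith
    _ = 1 := by rw [Real.exp_log (by norm_num)]; norm_num
end

section
/- The Cauchy problem f'(t) = 1 - f(t) + ∫₀¹ 2(1-m) f(mt) dm, f(0) = 0, has at most one solution among continuous functions f: [0,∞) → ℝ of at most linear growth (|f(t)| ≤ t for all t ≥ 0). -/
open MeasureTheory intervalIntegral

/-- The Cauchy problem f'(t) = 1 - f(t) + ∫₀¹ 2(1-m) f(mt) dm, f(0) = 0, has at most one
solution among continuous functions f : [0,∞) → ℝ of at most linear growth |f(t)| ≤ t. -/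
theorem stmt17 (f₁ f₂ : ℝ → ℝ)
    (h₁_cont : ContinuousOn f₁ (Set.Ici 0)) (h₂_cont : ContinuousOn f₂ (Set.Ici 0))
    (h₁_growth : ∀ t : ℝ, 0 ≤ t → |f₁ t| ≤ t) (h₂_growth : ∀ t : ℝ, 0 ≤ t → |f₂ t| ≤ t)
    (h₁0 : f₁ 0 = 0) (h₂0 : f₂ 0 = 0)
    (h₁_ode : ∀ t : ℝ, 0 ≤ t →
      HasDerivWithinAt f₁ (1 - f₁ t + ∫ m in (0:ℝ)..1, 2 * (1 - m) * f₁ (m * t)) (Set.Ici 0) t)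
    (h₂_ode : ∀ t : ℝ, 0 ≤ t →
      HasDerivWithinAt f₂ (1 - f₂ t + ∫ m in (0:ℝ)..1, 2 * (1 - m) * f₂ (m * t)) (Set.Ici 0) t) :
    ∀ t : ℝ, 0 ≤ t → f₁ t = f₂ t := by
  set g : ℝ → ℝ := fun x => f₁ x - f₂ x with hg_def
  have hg_cont : ContinuousOn g (Set.Ici 0) := h₁_cont.sub h₂_cont
  have hg0 : g 0 = 0 := by simp [hg_def, h₁0, h₂0]
  -- integrability of the integrands
  have hint : ∀ (f : ℝ → ℝ), ContinuousOn f (Set.Ici 0) → ∀ x : ℝ, 0 ≤ x →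
      IntervalIntegrable (fun m => 2 * (1 - m) * f (m * x)) volume 0 1 := by
    intro f hf x hx
    apply ContinuousOn.intervalIntegrable
    apply ContinuousOn.mul (by fun_prop)
    apply hf.comp (by fun_prop)
    intro m hm
    simp only [Set.uIcc_of_le (zero_le_one' ℝ), Set.mem_Icc] at hm
    exact Set.mem_Ici.2 (mul_nonneg hm.1 hx)
  -- derivative of g
  have hg' : ∀ x : ℝ, 0 ≤ x →
      HasDerivWithinAt g (-(g x) + ∫ m in (0:ℝ)..1, 2 * (1 - m) * g (m * x))
        (Set.Ici 0) x := by
    intro x hx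
    have h := (h₁_ode x hx).sub (h₂_ode x hx)
    have heq : (∫ m in (0:ℝ)..1, 2 * (1 - m) * g (m * x)) =
        (∫ m in (0:ℝ)..1, 2 * (1 - m) * f₁ (m * x)) -
        (∫ m in (0:ℝ)..1, 2 * (1 - m) * f₂ (m * x)) := by
      rw [← intervalIntegral.integral_sub (hint f₁ h₁_cont x hx) (hint f₂ h₂_cont x hx)]
      congr 1
      funext m
      simp only [hg_def]
      ring
    have heq2 : -(g x) + (∫ m in (0:ℝ)..1, 2 * (1 - m) * g (m * x)) =
        (1 - f₁ x + ∫ m in (0:ℝ)..1, 2 * (1 - m) * f₁ (m * x)) -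
        (1 - f₂ x + ∫ m in (0:ℝ)..1, 2 * (1 - m) * f₂ (m * x)) := by
      rw [heq]; simp only [hg_def]; ring
    rw [heq2]
    exact h
  -- main induction: |g x| ≤ 2 * 3^n / (n+1)! * x^(n+1)
  have key : ∀ n : ℕ, ∀ x : ℝ, 0 ≤ x →
      |g x| ≤ 2 * 3 ^ n / (Nat.factorial (n + 1) : ℝ) * x ^ (n + 1) := by
    intro n
    induction n with
    | zero =>
      intro x hx
      have : |g x| ≤ 2 * x :=
        calc |g x| ≤ |f₁ x| + |f₂ x| := abs_sub _ _
          _ ≤ x + x := add_le_add (h₁_growth x hx) (h₂_growth x hx)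
          _ = 2 * x := by ring
      simpa [Nat.factorial] using this
    | succ n ih =>
      -- set C := 2 * 3^n / (n+1)!
      set C : ℝ := 2 * 3 ^ n / (Nat.factorial (n + 1) : ℝ) with hC
      have hC0 : 0 ≤ C := by positivity
      intro t ht
      -- bound the integral term for x ≥ 0
      have hIbound : ∀ x : ℝ, 0 ≤ x →
          |∫ m in (0:ℝ)..1, 2 * (1 - m) * g (m * x)| ≤ 2 * C * x ^ (n + 1) := by
        intro x hx
        have h := intervalIntegral.norm_integral_le_of_norm_le_const
          (C := 2 * C * x ^ (n + 1)) (f := fun m => 2 * (1 - m) * g (m * x))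
          (a := 0) (b := 1) ?_
        · simpa [Real.norm_eq_abs] using h
        · intro m hm
          rw [Set.uIoc_of_le (zero_le_one' ℝ)] at hm
          obtain ⟨hm0, hm1⟩ := hm
          have hmx : 0 ≤ m * x := mul_nonneg hm0.le hx
          have hgm : |g (m * x)| ≤ C * (m * x) ^ (n + 1) := ih (m * x) hmx
          have hpow : (m * x) ^ (n + 1) ≤ x ^ (n + 1) := by
            apply pow_le_pow_left₀ hmx
            nlinarith
          calc ‖2 * (1 - m) * g (m * x)‖ = 2 * (1 - m) * |g (m * x)| := by
                rw [Real.norm_eq_abs, abs_mul, abs_of_nonneg (by nlinarith : (0:ℝ) ≤ 2 * (1 - m))]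
            _ ≤ 2 * 1 * (C * x ^ (n + 1)) := by
                apply mul_le_mul
                · nlinarith
                · exact hgm.trans (by nlinarith)
                · exact abs_nonneg _
                · norm_num
            _ = 2 * C * x ^ (n + 1) := by ring
      -- apply the fencing theorem on [0, t]
      have main := image_norm_le_of_norm_deriv_right_le_deriv_boundary
        (f := g) (a := 0) (b := t)
        (f' := fun x => -(g x) + ∫ m in (0:ℝ)..1, 2 * (1 - m) * g (m * x))
        (B := fun x => 3 * C / (n + 2) * x ^ (n + 2))
        (B' := fun x => 3 * C * x ^ (n + 1))
        (hg_cont.mono (Set.Icc_subset_Ici_self))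
        (fun x hx => (hg' x hx.1).mono (Set.Ici_subset_Ici.2 hx.1))
        (by simp [hg0])
        (fun x => by
          have h1 : HasDerivAt (fun x : ℝ => x ^ (n + 2)) (((n:ℝ) + 2) * x ^ (n + 1)) x := by
            simpa using (hasDerivAt_pow (n + 2) x)
          have h2 := h1.const_mul (3 * C / (n + 2))
          convert h2 using 1
          case e'_4 => rfl
          case e'_5 => rfl
          have hn2 : ((n:ℝ) + 2) ≠ 0 := by positivity
          field_simp)
        (fun x hx => by
          have hx0 : (0:ℝ) ≤ x := hx.1
          have h1 : |g x| ≤ C * x ^ (n + 1) := ih x hx0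
          have h2 := hIbound x hx0
          rw [Real.norm_eq_abs]
          calc |-(g x) + ∫ m in (0:ℝ)..1, 2 * (1 - m) * g (m * x)|
              ≤ |(-(g x))| + |∫ m in (0:ℝ)..1, 2 * (1 - m) * g (m * x)| := abs_add_le _ _
            _ ≤ C * x ^ (n + 1) + 2 * C * x ^ (n + 1) := by
                rw [abs_neg]; exact add_le_add h1 h2
            _ = 3 * C * x ^ (n + 1) := by ring)
      have := main (Set.right_mem_Icc.2 ht)
      rw [Real.norm_eq_abs] at this
      refine this.trans (le_of_eq ?_)
      rw [hC, Nat.factorial_succ (n + 1)]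
      push_cast
      field_simp
      ring
  -- conclude: limit
  intro t ht
  have hlim : Filter.Tendsto
      (fun n : ℕ => 2 * t * ((3 * t) ^ n / (Nat.factorial n : ℝ))) Filter.atTop (nhds 0) := by
    have := FloorSemiring.tendsto_pow_div_factorial_atTop (3 * t)
    simpa using this.const_mul (2 * t)
  have hbound : ∀ n : ℕ, |g t| ≤ 2 * t * ((3 * t) ^ n / (Nat.factorial n : ℝ)) := by
    intro n
    refine (key n t ht).trans ?_
    have hfac : (Nat.factorial n : ℝ) ≤ (Nat.factorial (n + 1) : ℝ) := by
      exact_mod_cast Nat.factorial_le (Nat.le_succ n)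
    have hfac0 : (0:ℝ) < (Nat.factorial n : ℝ) := by positivity
    have h1 : 2 * 3 ^ n / (Nat.factorial (n + 1) : ℝ) * t ^ (n + 1)
        = 2 * t * ((3 * t) ^ n / (Nat.factorial (n + 1) : ℝ)) := by
      rw [mul_pow, pow_succ]
      ring
    rw [h1]
    apply mul_le_mul_of_nonneg_left _ (by linarith : (0:ℝ) ≤ 2 * t)
    apply div_le_div_of_nonneg_left (by positivity) hfac0 hfac
  have : |g t| ≤ 0 := ge_of_tendsto hlim (Filter.Eventually.of_forall hbound)
  have : g t = 0 := abs_nonpos_iff.mp this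
  simpa [hg_def, sub_eq_zero] using this
end

section
/- Let β* = (√17-3)/2 and C₁ > 0. Suppose S: (0,1) → [0,∞) satisfies S(x) ≤ C₁/(x ∧ (1-x)) for all x, and there is a constant C₂ > 0 such that for all x ∈ (1/2,1), S(x) ≤ C₂ + (2/(β*+1))·(1-x)^{β*+1}·∫_{1/2}^x S(y)/(1-y)^{β*+2} dy. If additionally (β*+1)² > (2/0.9)/(1 - 1/90), then S(x) ≤ 100·C₂ for all x ∈ (1/2,1). -/
set_option maxHeartbeats 1000000


open MeasureTheory intervalIntegral

/-- A priori bound by bootstrap: let β* = (√17-3)/2, C₁, C₂ > 0, and S : (0,1) → [0,∞)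
measurable with S(x) ≤ C₁/(x∧(1-x)), and suppose for all x ∈ (1/2,1),
S(x) ≤ C₂ + (2/(β*+1))·(1-x)^{β*+1}·∫_{1/2}^x S(y)/(1-y)^{β*+2} dy.
If (β*+1)² > (2/0.9)/(1 - 1/90), then S(x) ≤ 100·C₂ on (1/2,1). -/
theorem stmt18 (S : ℝ → ℝ) (hS_meas : Measurable S)
    (C₁ C₂ : ℝ) (hC₁ : 0 < C₁) (hC₂ : 0 < C₂)
    (hS_nonneg : ∀ x ∈ Set.Ioo (0:ℝ) 1, 0 ≤ S x)
    (hS_apriori : ∀ x ∈ Set.Ioo (0:ℝ) 1, S x ≤ C₁ / min x (1 - x))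
    (hS_ineq : ∀ x ∈ Set.Ioo (1/2 : ℝ) 1,
      S x ≤ C₂ + (2 / ((Real.sqrt 17 - 3) / 2 + 1))
          * (1 - x) ^ ((Real.sqrt 17 - 3) / 2 + 1)
          * ∫ y in (1/2 : ℝ)..x, S y / (1 - y) ^ ((Real.sqrt 17 - 3) / 2 + 2))
    (hβ : ((Real.sqrt 17 - 3) / 2 + 1) ^ 2 > (2 / 0.9) / (1 - 1 / 90)) :
    ∀ x ∈ Set.Ioo (1/2 : ℝ) 1, S x ≤ 100 * C₂ := by
  intro x hx
  obtain ⟨hx1, hx2⟩ := hx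
  set β : ℝ := (Real.sqrt 17 - 3) / 2 with hβdef
  set b : ℝ := β + 1 with hbdef
  have hsqrt : (3:ℝ) < Real.sqrt 17 := by
    nlinarith [Real.sq_sqrt (by norm_num : (0:ℝ) ≤ 17), Real.sqrt_nonneg 17]
  have hb_pos : (0:ℝ) < b := by rw [hbdef, hβdef]; linarith
  have hb2 : b ^ 2 > 200 / 89 := by
    have := hβ; norm_num at this ⊢; linarith
  have he : β + 2 = b + 1 := by rw [hbdef]; ring
  rw [he] at hS_ineq
  have hb1_pos : (0:ℝ) < b + 1 := by linarith
  -- the sup of S over Ioc (1/2) x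
  have hx0 : (0:ℝ) < 1 - x := by linarith
  have hmemx : x ∈ Set.Ioc (1/2:ℝ) x := ⟨hx1, le_refl x⟩
  have hsub : ∀ y ∈ Set.Ioc (1/2:ℝ) x, y ∈ Set.Ioo (0:ℝ) 1 :=
    fun y hy => ⟨by linarith [hy.1], by linarith [hy.2]⟩
  have hbdd : BddAbove (S '' Set.Ioc (1/2:ℝ) x) := by
    refine ⟨C₁ / (1 - x), ?_⟩
    rintro _ ⟨y, hy, rfl⟩
    have hy01 := hsub y hy
    have h1y : (0:ℝ) < 1 - y := by linarith [hy01.2]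
    have hmin : min y (1 - y) = 1 - y := min_eq_right (by linarith [hy.1])
    have := hS_apriori y hy01
    rw [hmin] at this
    refine this.trans ?_
    apply div_le_div_of_nonneg_left hC₁.le hx0
    linarith [hy.2]
  set M : ℝ := sSup (S '' Set.Ioc (1/2:ℝ) x) with hMdef
  have hSxM : S x ≤ M := le_csSup hbdd ⟨x, hmemx, rfl⟩
  have hM_nonneg : 0 ≤ M := le_trans (hS_nonneg x (hsub x hmemx)) hSxM
  have hSleM : ∀ y ∈ Set.Ioc (1/2:ℝ) x, S y ≤ M := fun y hy => le_csSup hbdd ⟨y, hy, rfl⟩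
  -- key step: for every z in Ioc (1/2) x, S z ≤ C₂ + (2/b²) M
  have key : ∀ z ∈ Set.Ioc (1/2:ℝ) x, S z ≤ C₂ + 2 / b ^ 2 * M := by
    intro z hz
    have hz1 : (1/2:ℝ) < z := hz.1
    have hzx : z ≤ x := hz.2
    have hz2 : z < 1 := lt_of_le_of_lt hzx hx2
    have h1z : (0:ℝ) < 1 - z := by linarith
    have hzle : (1/2:ℝ) ≤ z := hz1.le
    -- integrability of the integrand
    have hfm : Measurable (fun y : ℝ => S y / (1 - y) ^ (b + 1)) := by fun_prop
    have hfint : IntegrableOn (fun y : ℝ => S y / (1 - y) ^ (b + 1)) (Set.Ioc (1/2:ℝ) z) := by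
      apply Measure.integrableOn_of_bounded (M := (C₁ / (1 - x)) / (1 - z) ^ (b + 1))
      · exact (measure_Ioc_lt_top).ne
      · exact hfm.aestronglyMeasurable
      · rw [ae_restrict_iff' measurableSet_Ioc]
        filter_upwards with y hy
        have hyx : y ∈ Set.Ioc (1/2:ℝ) x := ⟨hy.1, hy.2.trans hzx⟩
        have hy01 := hsub y hyx
        have h1y : (0:ℝ) < 1 - y := by linarith [hy01.2]
        have hry : (0:ℝ) < (1 - y) ^ (b + 1) := Real.rpow_pos_of_pos h1y _
        have hrz : (0:ℝ) < (1 - z) ^ (b + 1) := Real.rpow_pos_of_pos h1z _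
        have hSy0 : 0 ≤ S y := hS_nonneg y hy01
        have hSyb : S y ≤ C₁ / (1 - x) := by
          have hmin : min y (1 - y) = 1 - y := min_eq_right (by linarith [hy.1])
          have := hS_apriori y hy01
          rw [hmin] at this
          refine this.trans (div_le_div_of_nonneg_left hC₁.le hx0 (by linarith [hyx.2]))
        have hmono : (1 - z) ^ (b + 1) ≤ (1 - y) ^ (b + 1) :=
          Real.rpow_le_rpow h1z.le (by linarith [hy.2]) hb1_pos.le
        rw [Real.norm_eq_abs, abs_of_nonneg (div_nonneg hSy0 hry.le)]
        apply div_le_div₀ (div_nonneg hC₁.le hx0.le) hSyb hrz hmono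
    -- integrability of the majorant
    have hgint : IntegrableOn (fun y : ℝ => M / (1 - y) ^ (b + 1)) (Set.Ioc (1/2:ℝ) z) := by
      apply (ContinuousOn.integrableOn_Icc ?_).mono_set Set.Ioc_subset_Icc_self
      apply ContinuousOn.div continuousOn_const
      · exact (continuousOn_const.sub continuousOn_id).rpow_const
          (fun y hy => Or.inl (by simp only [Set.mem_Icc, id_eq, Pi.sub_apply] at hy ⊢; intro h; nlinarith [hy.2]))
      · intro y hy
        simp only [Set.mem_Icc] at hy
        exact ne_of_gt (Real.rpow_pos_of_pos (by linarith [hy.2]) _)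
    -- compare the integrals
    have hcmp : (∫ y in (1/2:ℝ)..z, S y / (1 - y) ^ (b + 1))
        ≤ ∫ y in (1/2:ℝ)..z, M / (1 - y) ^ (b + 1) := by
      rw [intervalIntegral.integral_of_le hzle, intervalIntegral.integral_of_le hzle]
      apply setIntegral_mono_on hfint hgint measurableSet_Ioc
      intro y hy
      have hry : (0:ℝ) < (1 - y) ^ (b + 1) :=
        Real.rpow_pos_of_pos (by linarith [(hsub y ⟨hy.1, hy.2.trans hzx⟩).2]) _
      gcongr
      exact hSleM y ⟨hy.1, hy.2.trans hzx⟩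
    -- compute the majorant integral
    have hIval : (∫ y in (1/2:ℝ)..z, (1 - y) ^ (-(b + 1)))
        = ((1 - z) ^ (-b) - (1/2:ℝ) ^ (-b)) / b := by
      have h1 : (∫ y in (1/2:ℝ)..z, (fun u : ℝ => u ^ (-(b+1))) (1 - y))
          = ∫ u in (1 - z)..(1 - 1/2), (fun u : ℝ => u ^ (-(b+1))) u :=
        intervalIntegral.integral_comp_sub_left (fun u : ℝ => u ^ (-(b+1))) 1
      simp only at h1
      rw [h1]
      have h0 : (0:ℝ) ∉ Set.uIcc (1 - z) (1 - 1/2 : ℝ) := by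
        rw [Set.mem_uIcc]
        push_neg
        constructor <;> intro h <;> nlinarith
      rw [integral_rpow (Or.inr ⟨by intro h; nlinarith, h0⟩)]
      have : -(b+1) + 1 = -b := by ring
      rw [this]
      have h12 : (1:ℝ) - 1/2 = 1/2 := by norm_num
      rw [h12, div_eq_div_iff (by intro h; nlinarith : -b ≠ 0) (ne_of_gt hb_pos)]
      ring
    have hgval : (∫ y in (1/2:ℝ)..z, M / (1 - y) ^ (b + 1))
        = M * (((1 - z) ^ (-b) - (1/2:ℝ) ^ (-b)) / b) := by
      have hcong : (∫ y in (1/2:ℝ)..z, M / (1 - y) ^ (b + 1))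
          = ∫ y in (1/2:ℝ)..z, M * (1 - y) ^ (-(b + 1)) := by
        apply intervalIntegral.integral_congr
        intro y hy
        rw [Set.uIcc_of_le hzle, Set.mem_Icc] at hy
        have h1y : (0:ℝ) ≤ 1 - y := by linarith [hy.2]
        show M / (1 - y) ^ (b + 1) = M * (1 - y) ^ (-(b + 1))
        rw [Real.rpow_neg h1y, div_eq_mul_inv]
      rw [hcong, intervalIntegral.integral_const_mul, hIval]
    -- put things together
    have hineq := hS_ineq z ⟨hz1, hz2⟩
    have hP : (0:ℝ) < (1 - z) ^ b := Real.rpow_pos_of_pos h1z _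
    have hPQ : (1 - z) ^ b * (1 - z) ^ (-b) = 1 := by
      rw [← Real.rpow_add h1z]; simp
    have hR : (0:ℝ) < (1/2:ℝ) ^ (-b) := Real.rpow_pos_of_pos (by norm_num) _
    have hstep : 2 / b * (1 - z) ^ b * ∫ y in (1/2:ℝ)..z, S y / (1 - y) ^ (b + 1)
        ≤ 2 / b ^ 2 * M := by
      have h2b : (0:ℝ) ≤ 2 / b * (1 - z) ^ b := by positivity
      calc 2 / b * (1 - z) ^ b * ∫ y in (1/2:ℝ)..z, S y / (1 - y) ^ (b + 1)
          ≤ 2 / b * (1 - z) ^ b * ∫ y in (1/2:ℝ)..z, M / (1 - y) ^ (b + 1) := by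
            exact mul_le_mul_of_nonneg_left hcmp h2b
        _ = 2 / b ^ 2 * M * ((1 - z) ^ b * (1 - z) ^ (-b))
              - 2 / b ^ 2 * M * ((1 - z) ^ b * (1/2:ℝ) ^ (-b)) := by
            rw [hgval]; field_simp
        _ ≤ 2 / b ^ 2 * M := by
            rw [hPQ]
            have : 0 ≤ 2 / b ^ 2 * M * ((1 - z) ^ b * (1/2:ℝ) ^ (-b)) := by positivity
            linarith
    calc S z ≤ C₂ + 2 / b * (1 - z) ^ b * ∫ y in (1/2:ℝ)..z, S y / (1 - y) ^ (b + 1) := hineq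
      _ ≤ C₂ + 2 / b ^ 2 * M := by linarith
  -- conclude: M ≤ C₂ + (2/b²) M, contraction
  have hMle : M ≤ C₂ + 2 / b ^ 2 * M := by
    apply csSup_le (Set.Nonempty.image S ⟨x, hmemx⟩)
    rintro _ ⟨z, hz, rfl⟩
    exact key z hz
  have hcontr : 2 / b ^ 2 * M ≤ 89 / 100 * M := by
    apply mul_le_mul_of_nonneg_right _ hM_nonneg
    rw [div_le_iff₀ (by positivity)]
    nlinarith
  have : M ≤ 100 * C₂ := by nlinarith
  linarith
end
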